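/- Let G be a finite graph on n ≥ 4 vertices with labels assigned by a uniform random permutation. With R₁(t), R₂(t) the within-group edge counts (both labels ≤ t, resp. both > t), the covariance is Cov(R₁(t), R₂(t)) = [t(t−1)(n−t)(n−t−1)/(n(n−1)(n−2)(n−3))]·(|G|² − Σᵢ|Gᵢ|² + |G|) − E[R₁(t)]·E[R₂(t)]. -/

import Mathlib

open Finset
open scoped Classical

noncomputable section

/-- Label of vertex `v` under permutation `π`: a value in `{1,...,n}`. -/
def lab {n : ℕ} (π : Equiv.Perm (Fin n)) (v : Fin n) : ℕ := (π v).val + 1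

/-- Number of edges of `G` with both endpoint labels `≤ t`. -/
def R1 {n : ℕ} (G : SimpleGraph (Fin n)) (t : ℕ) (π : Equiv.Perm (Fin n)) : ℕ :=
  (G.edgeFinset.filter (fun e => ∀ v ∈ e, lab π v ≤ t)).card

/-- Number of edges of `G` with both endpoint labels `> t`. -/
def R2 {n : ℕ} (G : SimpleGraph (Fin n)) (t : ℕ) (π : Equiv.Perm (Fin n)) : ℕ :=
  (G.edgeFinset.filter (fun e => ∀ v ∈ e, t < lab π v)).card

/-- Number of edges of `G` with one endpoint label `≤ t` and the other `> t`. -/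
def R0 {n : ℕ} (G : SimpleGraph (Fin n)) (t : ℕ) (π : Equiv.Perm (Fin n)) : ℕ :=
  (G.edgeFinset.filter (fun e => (∃ v ∈ e, lab π v ≤ t) ∧ (∃ v ∈ e, t < lab π v))).card

/-- Expectation under the permutation null distribution (uniform over all `n!` permutations). -/
def Ex {n : ℕ} (f : Equiv.Perm (Fin n) → ℝ) : ℝ :=
  (∑ π : Equiv.Perm (Fin n), f π) / (Nat.factorial n)

/-- Variance under the permutation null distribution. -/
def Var {n : ℕ} (f : Equiv.Perm (Fin n) → ℝ) : ℝ := Ex (fun π => (f π - Ex f) ^ 2)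

/-- Covariance under the permutation null distribution. -/
def Cov {n : ℕ} (f g : Equiv.Perm (Fin n) → ℝ) : ℝ :=
  Ex (fun π => (f π - Ex f) * (g π - Ex g))

/-! ### Auxiliary lemmas -/

lemma exists_perm_comp' {α β : Type*} [Finite β] (f g : α ↪ β) :
    ∃ σ : Equiv.Perm β, ∀ i, σ (f i) = g i := by
  classical
  let e : {x // x ∈ Set.range f} ≃ {x // x ∈ Set.range g} :=
    ((Equiv.ofInjective f f.injective).symm.trans (Equiv.ofInjective g g.injective))
  refine ⟨e.extendSubtype, fun i => ?_⟩
  rw [e.extendSubtype_apply_of_mem _ ⟨i, rfl⟩]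
  simp only [e, Equiv.trans_apply]
  rw [show (⟨f i, ⟨i, rfl⟩⟩ : {x // x ∈ Set.range f}) = Equiv.ofInjective f f.injective i from rfl]
  simp [Equiv.ofInjective_apply]

/-- The restriction of a permutation along a fixed embedding of `Fin 4`. -/
def resEmb {n : ℕ} (v : Fin 4 ↪ Fin n) (π : Equiv.Perm (Fin n)) : Fin 4 ↪ Fin n :=
  v.trans π.toEmbedding

lemma resEmb_apply {n : ℕ} (v : Fin 4 ↪ Fin n) (π : Equiv.Perm (Fin n)) (i : Fin 4) :
    resEmb v π i = π (v i) := rfl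

lemma fiber_const {n : ℕ} (v : Fin 4 ↪ Fin n) (j j' : Fin 4 ↪ Fin n) :
    (univ.filter fun π : Equiv.Perm (Fin n) => resEmb v π = j).card
      = (univ.filter fun π : Equiv.Perm (Fin n) => resEmb v π = j').card := by
  obtain ⟨σ, hσ⟩ := exists_perm_comp' j j'
  apply Finset.card_bij (fun π _ => σ * π)
  · intro π hπ
    simp only [mem_filter, mem_univ, true_and] at hπ ⊢
    refine DFunLike.ext _ _ fun i => ?_
    have h1 : resEmb v π i = j i := by rw [hπ]
    rw [resEmb_apply] at h1 ⊢
    simp [Equiv.Perm.mul_apply, h1, hσ]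
  · intro π₁ h₁ π₂ h₂ h
    exact mul_left_cancel h
  · intro π hπ
    refine ⟨σ⁻¹ * π, ?_, by group⟩
    simp only [mem_filter, mem_univ, true_and] at hπ ⊢
    refine DFunLike.ext _ _ fun i => ?_
    have h1 : resEmb v π i = j' i := by rw [hπ]
    rw [resEmb_apply] at h1 ⊢
    apply σ.injective
    simp [Equiv.Perm.mul_apply, h1, hσ]

lemma card_perm_eq {n : ℕ} (v : Fin 4 ↪ Fin n) (j : Fin 4 ↪ Fin n) :
    Nat.factorial n =
      (Fintype.card (Fin 4 ↪ Fin n)) *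
        (univ.filter fun π : Equiv.Perm (Fin n) => resEmb v π = j).card := by
  have h := Finset.card_eq_sum_card_fiberwise
    (f := resEmb v) (s := (univ : Finset (Equiv.Perm (Fin n)))) (t := univ) (fun x _ => mem_univ _)
  rw [Finset.card_univ, Fintype.card_perm, Fintype.card_fin] at h
  rw [h, Finset.sum_congr rfl (fun j' _ => fiber_const v j' j)]
  simp [Finset.card_univ, mul_comm]

lemma card_good_emb {n : ℕ} (L : Finset (Fin n)) :
    (univ.filter fun j : Fin 4 ↪ Fin n =>
        j 0 ∈ L ∧ j 1 ∈ L ∧ j 2 ∉ L ∧ j 3 ∉ L).card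
      = (L.card * L.card - L.card) * (Lᶜ.card * Lᶜ.card - Lᶜ.card) := by
  rw [← Finset.offDiag_card, ← Finset.offDiag_card, ← Finset.card_product]
  apply Finset.card_bij (fun j _ => ((j 0, j 1), (j 2, j 3)))
  · intro j hj
    simp only [mem_filter, mem_univ, true_and] at hj
    obtain ⟨h0, h1, h2, h3⟩ := hj
    simp only [Finset.mem_product, Finset.mem_offDiag, Finset.mem_compl]
    refine ⟨⟨h0, h1, ?_⟩, h2, h3, ?_⟩
    · exact fun h => (by decide : (0:Fin 4) ≠ 1) (j.injective h)
    · exact fun h => (by decide : (2:Fin 4) ≠ 3) (j.injective h)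
  · intro j₁ h₁ j₂ h₂ h
    simp only [Prod.mk.injEq] at h
    obtain ⟨⟨e0, e1⟩, e2, e3⟩ := h
    refine DFunLike.ext _ _ fun i => ?_
    fin_cases i <;> assumption
  · rintro ⟨⟨x, y⟩, z, w⟩ hm
    simp only [Finset.mem_product, Finset.mem_offDiag, Finset.mem_compl] at hm
    obtain ⟨⟨hx, hy, hxy⟩, hz, hw, hzw⟩ := hm
    have hinj : Function.Injective ![x, y, z, w] := by
      intro i i' h
      fin_cases i <;> fin_cases i' <;> simp_all
    refine ⟨⟨![x, y, z, w], hinj⟩, ?_, ?_⟩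
    · simp only [mem_filter, mem_univ, true_and, Function.Embedding.coeFn_mk]
      refine ⟨by simpa using hx, by simpa using hy, by simpa using hz, by simpa using hw⟩
    · simp

lemma sym2_card_two {n : ℕ} {e : Sym2 (Fin n)} (he : ¬ e.IsDiag) :
    (univ.filter fun i => i ∈ e).card = 2 := by
  induction e with
  | _ a b =>
    rw [Sym2.isDiag_iff_proj_eq] at he
    have : (univ.filter fun i => i ∈ s(a, b)) = {a, b} := by
      ext i; simp [Sym2.mem_iff]
    rw [this, Finset.card_insert_of_notMem (by simpa using he), Finset.card_singleton]

lemma sym2_card_one {n : ℕ} {e f : Sym2 (Fin n)} (hne : e ≠ f)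
    (hx : ∃ v, v ∈ e ∧ v ∈ f) :
    (univ.filter fun i => i ∈ e ∧ i ∈ f).card = 1 := by
  obtain ⟨x, hxe, hxf⟩ := hx
  rw [Finset.card_eq_one]
  refine ⟨x, ?_⟩
  ext y
  simp only [mem_filter, mem_univ, true_and, Finset.mem_singleton]
  constructor
  · rintro ⟨hye, hyf⟩
    by_contra hyx
    have h1 : e = s(y, x) := ((Sym2.mem_and_mem_iff hyx).mp ⟨hye, hxe⟩)
    have h2 : f = s(y, x) := ((Sym2.mem_and_mem_iff hyx).mp ⟨hyf, hxf⟩)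
    exact hne (h1.trans h2.symm)
  · rintro rfl; exact ⟨hxe, hxf⟩

lemma disj_card {n : ℕ} (G : SimpleGraph (Fin n)) :
    ((G.edgeFinset ×ˢ G.edgeFinset).filter fun p => ∀ v ∈ p.1, v ∉ p.2).card
        + ∑ i : Fin n, (G.degree i)^2
      = G.edgeFinset.card ^ 2 + G.edgeFinset.card := by
  set E := G.edgeFinset with hE
  set P := E ×ˢ E with hP
  set D := P.filter (fun p => ∀ v ∈ p.1, v ∉ p.2) with hD
  set N := P.filter (fun p => ¬ ∀ v ∈ p.1, v ∉ p.2) with hN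
  have hdeg : ∀ i : Fin n, (G.degree i)^2
      = ((P.filter fun p => i ∈ p.1 ∧ i ∈ p.2)).card := by
    intro i
    have h1 : E.filter (fun e => i ∈ e) = G.incidenceFinset i := by
      ext e
      simp [hE, SimpleGraph.mem_incidenceFinset, SimpleGraph.incidenceSet,
        SimpleGraph.mem_edgeFinset, and_comm]
    have h2 : (P.filter fun p => i ∈ p.1 ∧ i ∈ p.2)
        = (E.filter fun e => i ∈ e) ×ˢ (E.filter fun e => i ∈ e) := by
      ext p; simp [hP]; tauto
    rw [h2, Finset.card_product, h1, SimpleGraph.card_incidenceFinset_eq_degree, sq]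
  have hsum : ∑ i : Fin n, (G.degree i)^2
      = ∑ p ∈ P, (univ.filter fun i => i ∈ p.1 ∧ i ∈ p.2).card := by
    rw [Finset.sum_congr rfl (fun i _ => hdeg i)]
    simp only [Finset.card_filter]
    rw [Finset.sum_comm]
  have hPDN : P.card = D.card + N.card := by
    rw [hD, hN, Finset.card_filter_add_card_filter_not]
  have hDzero : ∀ p ∈ D, (univ.filter fun i => i ∈ p.1 ∧ i ∈ p.2).card = 0 := by
    intro p hp
    simp only [hD, mem_filter] at hp
    rw [Finset.card_eq_zero, Finset.filter_eq_empty_iff]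
    intro i _
    exact fun h => hp.2 i h.1 h.2
  have hNval : ∀ p ∈ N, (univ.filter fun i => i ∈ p.1 ∧ i ∈ p.2).card
      = if p.1 = p.2 then 2 else 1 := by
    intro p hp
    simp only [hN, mem_filter, hP, Finset.mem_product] at hp
    obtain ⟨⟨he1, he2⟩, hint⟩ := hp
    push_neg at hint
    obtain ⟨x, hx1, hx2⟩ := hint
    by_cases hpp : p.1 = p.2
    · rw [if_pos hpp]
      have : (univ.filter fun i => i ∈ p.1 ∧ i ∈ p.2) = (univ.filter fun i => i ∈ p.1) := by
        ext i; simp [hpp]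
      rw [this]
      exact sym2_card_two (SimpleGraph.not_isDiag_of_mem_edgeFinset (hE ▸ he1))
    · rw [if_neg hpp]
      exact sym2_card_one hpp ⟨x, hx1, hx2⟩
  have hdiagN : (N.filter fun p => p.1 = p.2).card = E.card := by
    apply Finset.card_bij (fun p _ => p.1)
    · intro p hp
      have hp1 := (Finset.mem_filter.mp hp).1
      have hp2 := (Finset.mem_filter.mp hp1).1
      exact (Finset.mem_product.mp hp2).1
    · intro p hp q hq h
      have hp2 := (Finset.mem_filter.mp hp).2
      have hq2 := (Finset.mem_filter.mp hq).2
      exact Prod.ext h (by rw [← hp2, ← hq2, h])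
    · intro e he
      refine ⟨(e, e), ?_, rfl⟩
      have hnot : ¬ ∀ v ∈ (e, e).1, v ∉ (e, e).2 := by
        push_neg
        exact ⟨e.out.1, Sym2.out_fst_mem e, Sym2.out_fst_mem e⟩
      exact Finset.mem_filter.mpr ⟨Finset.mem_filter.mpr
        ⟨Finset.mem_product.mpr ⟨he, he⟩, hnot⟩, rfl⟩
  have hNsum : ∑ p ∈ N, (univ.filter fun i => i ∈ p.1 ∧ i ∈ p.2).card
      = N.card + E.card := by
    rw [Finset.sum_congr rfl hNval]
    rw [Finset.sum_ite, Finset.sum_const, Finset.sum_const]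
    rw [hdiagN]
    have : (N.filter fun p => ¬ p.1 = p.2).card = N.card - E.card := by
      rw [← hdiagN, eq_tsub_iff_add_eq_of_le (Finset.card_le_card (Finset.filter_subset _ _)),
        add_comm, Finset.card_filter_add_card_filter_not]
    rw [this, smul_eq_mul, smul_eq_mul]
    have hle : E.card ≤ N.card := hdiagN ▸ Finset.card_le_card (Finset.filter_subset _ _)
    omega
  have hsplit : ∑ p ∈ P, (univ.filter fun i => i ∈ p.1 ∧ i ∈ p.2).card
      = N.card + E.card := by
    rw [← Finset.sum_filter_add_sum_filter_not P (fun p => ∀ v ∈ p.1, v ∉ p.2)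
        (fun p => (univ.filter fun i => i ∈ p.1 ∧ i ∈ p.2).card)]
    rw [show P.filter (fun p => ∀ v ∈ p.1, v ∉ p.2) = D from rfl,
        show P.filter (fun p => ¬ ∀ v ∈ p.1, v ∉ p.2) = N from rfl]
    rw [Finset.sum_eq_zero hDzero, hNsum, zero_add]
  rw [hsum, hsplit]
  have hPcard : P.card = E.card * E.card := by rw [hP, Finset.card_product]
  rw [pow_two, ← hPcard, hPDN]
  omega

lemma card_S {n : ℕ} {a b c d : Fin n} (hab : a ≠ b) (hcd : c ≠ d) (hac : a ≠ c) (had : a ≠ d)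
    (hbc : b ≠ c) (hbd : b ≠ d) (L : Finset (Fin n)) :
    Fintype.card (Fin 4 ↪ Fin n) *
      (univ.filter fun π : Equiv.Perm (Fin n) =>
        (π a ∈ L ∧ π b ∈ L) ∧ (π c ∉ L ∧ π d ∉ L)).card
    = (univ.filter fun j : Fin 4 ↪ Fin n =>
        j 0 ∈ L ∧ j 1 ∈ L ∧ j 2 ∉ L ∧ j 3 ∉ L).card * n.factorial := by
  have hinj : Function.Injective ![a, b, c, d] := by
    intro i i' h
    fin_cases i <;> fin_cases i' <;> simp_all
  set v : Fin 4 ↪ Fin n := ⟨![a, b, c, d], hinj⟩ with hv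
  have hv0 : v 0 = a := rfl
  have hv1 : v 1 = b := rfl
  have hv2 : v 2 = c := rfl
  have hv3 : v 3 = d := rfl
  set S := univ.filter fun π : Equiv.Perm (Fin n) =>
    (π a ∈ L ∧ π b ∈ L) ∧ (π c ∉ L ∧ π d ∉ L) with hS
  set GJ := univ.filter fun j : Fin 4 ↪ Fin n =>
    j 0 ∈ L ∧ j 1 ∈ L ∧ j 2 ∉ L ∧ j 3 ∉ L with hGJ
  have hmaps : ∀ π ∈ S, resEmb v π ∈ GJ := by
    intro π hπ
    simp only [hS, mem_filter, mem_univ, true_and] at hπ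
    simp only [hGJ, mem_filter, mem_univ, true_and, resEmb_apply, hv0, hv1, hv2, hv3]
    tauto
  have h := Finset.card_eq_sum_card_fiberwise hmaps
  have hfib : ∀ j ∈ GJ, S.filter (fun π => resEmb v π = j)
      = univ.filter (fun π => resEmb v π = j) := by
    intro j hj
    ext π
    simp only [mem_filter, mem_univ, true_and, hS]
    constructor
    · rintro ⟨_, h2⟩; exact h2
    · intro h2
      refine ⟨?_, h2⟩
      simp only [hGJ, mem_filter, mem_univ, true_and] at hj
      have e0 : π a = j 0 := by rw [← h2, resEmb_apply, hv0]
      have e1 : π b = j 1 := by rw [← h2, resEmb_apply, hv1]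
      have e2 : π c = j 2 := by rw [← h2, resEmb_apply, hv2]
      have e3 : π d = j 3 := by rw [← h2, resEmb_apply, hv3]
      rw [e0, e1, e2, e3]
      tauto
  rw [h, Finset.mul_sum]
  rw [Finset.sum_congr rfl (fun j hj => by rw [hfib j hj, ← card_perm_eq v j])]
  rw [Finset.sum_const, smul_eq_mul]

lemma cov_eq {n : ℕ} (f g : Equiv.Perm (Fin n) → ℝ) :
    Cov f g = Ex (fun π => f π * g π) - Ex f * Ex g := by
  have hfac : ((Nat.factorial n : ℕ) : ℝ) ≠ 0 := Nat.cast_ne_zero.mpr n.factorial_ne_zero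
  have hcard : (Finset.univ : Finset (Equiv.Perm (Fin n))).card = Nat.factorial n := by
    rw [Finset.card_univ, Fintype.card_perm, Fintype.card_fin]
  unfold Cov Ex
  have h1 : ∑ π : Equiv.Perm (Fin n), (f π - (∑ π', f π') / n.factorial) *
      (g π - (∑ π', g π') / n.factorial)
      = (∑ π, f π * g π) - ((∑ π', f π') / n.factorial) * (∑ π, g π)
        - ((∑ π', g π') / n.factorial) * (∑ π, f π)
        + (n.factorial : ℝ) * (((∑ π', f π') / n.factorial) * ((∑ π', g π') / n.factorial)) := by
    rw [Finset.sum_congr rfl (fun π _ => by ring_nf :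
      ∀ π ∈ (Finset.univ : Finset (Equiv.Perm (Fin n))),
        (f π - (∑ π', f π') / n.factorial) * (g π - (∑ π', g π') / n.factorial)
          = f π * g π - ((∑ π', f π') / n.factorial) * g π
            - ((∑ π', g π') / n.factorial) * f π
            + ((∑ π', f π') / n.factorial) * ((∑ π', g π') / n.factorial))]
    rw [Finset.sum_add_distrib, Finset.sum_sub_distrib, Finset.sum_sub_distrib,
      ← Finset.mul_sum, ← Finset.mul_sum, Finset.sum_const, hcard, nsmul_eq_mul]
  rw [h1]
  field_simp
  ring

theorem covariance_R1_R2 (n t : ℕ) (hn : 4 ≤ n) (ht1 : 1 ≤ t) (ht2 : t < n)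
    (G : SimpleGraph (Fin n)) :
    Cov (fun π => (R1 G t π : ℝ)) (fun π => (R2 G t π : ℝ)) =
      (t : ℝ) * ((t : ℝ) - 1) * ((n : ℝ) - (t : ℝ)) * ((n : ℝ) - (t : ℝ) - 1) /
        ((n : ℝ) * ((n : ℝ) - 1) * ((n : ℝ) - 2) * ((n : ℝ) - 3))
        * ((G.edgeFinset.card : ℝ) ^ 2 - (∑ i : Fin n, (G.degree i : ℝ) ^ 2)
            + (G.edgeFinset.card : ℝ))
      - Ex (fun π => (R1 G t π : ℝ)) * Ex (fun π => (R2 G t π : ℝ)) := by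
  classical
  rw [cov_eq]
  congr 1
  -- set up notation
  set L : Finset (Fin n) := univ.filter (fun u : Fin n => (u : ℕ) < t) with hL
  have hLcard : L.card = t := by
    have : L = Finset.Iio (⟨t, ht2⟩ : Fin n) := by
      ext u; simp [hL, Fin.lt_def]
    rw [this, Fin.card_Iio]
  have hLc : Lᶜ.card = n - t := by
    rw [Finset.card_compl, hLcard, Fintype.card_fin]
  set E := G.edgeFinset with hE
  set P := E ×ˢ E with hP
  set Dj := P.filter (fun p => ∀ v ∈ p.1, v ∉ p.2) with hDj
  set GJ := univ.filter (fun j : Fin 4 ↪ Fin n =>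
    j 0 ∈ L ∧ j 1 ∈ L ∧ j 2 ∉ L ∧ j 3 ∉ L) with hGJ
  set df := Fintype.card (Fin 4 ↪ Fin n) with hdf
  have hdfval : df = n.descFactorial 4 := by
    rw [hdf, Fintype.card_embedding_eq, Fintype.card_fin, Fintype.card_fin]
  have hdfpos : 0 < df := by
    rw [hdfval]
    exact Nat.pos_of_ne_zero (by rw [Ne, Nat.descFactorial_eq_zero_iff_lt]; omega)
  -- per permutation: product of counts as a count over pairs
  have hprod : ∀ π : Equiv.Perm (Fin n), R1 G t π * R2 G t π
      = (P.filter fun p => (∀ v ∈ p.1, lab π v ≤ t) ∧ (∀ v ∈ p.2, t < lab π v)).card := by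
    intro π
    unfold R1 R2
    rw [← Finset.card_product]
    congr 1
    ext p
    simp only [Finset.mem_product, mem_filter, hP, hE]
    tauto
  -- the key per-pair count
  have hkey : ∀ p ∈ P, df *
      (univ.filter fun π : Equiv.Perm (Fin n) =>
        (∀ v ∈ p.1, lab π v ≤ t) ∧ (∀ v ∈ p.2, t < lab π v)).card
      = if (∀ v ∈ p.1, v ∉ p.2) then GJ.card * n.factorial else 0 := by
    rintro ⟨e, f⟩ hp
    rw [hP, Finset.mem_product] at hp
    obtain ⟨he, hf⟩ := hp
    by_cases hdisj : ∀ v ∈ (e, f).1, v ∉ (e, f).2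
    · rw [if_pos hdisj]
      simp only at hdisj ⊢
      induction e with
      | _ a b =>
        induction f with
        | _ c d =>
          have hab : a ≠ b := by
            intro h
            exact (SimpleGraph.not_isDiag_of_mem_edgeFinset (hE ▸ he)) (by rw [h]; exact rfl)
          have hcd : c ≠ d := by
            intro h
            exact (SimpleGraph.not_isDiag_of_mem_edgeFinset (hE ▸ hf)) (by rw [h]; exact rfl)
          have hac : a ≠ c := fun h => hdisj a (by simp) (by simp [h])
          have had : a ≠ d := fun h => hdisj a (by simp) (by simp [h])
          have hbc : b ≠ c := fun h => hdisj b (by simp) (by simp [h])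
          have hbd : b ≠ d := fun h => hdisj b (by simp) (by simp [h])
          have hset : (univ.filter fun π : Equiv.Perm (Fin n) =>
              (∀ v ∈ s(a, b), lab π v ≤ t) ∧ (∀ v ∈ s(c, d), t < lab π v))
              = (univ.filter fun π : Equiv.Perm (Fin n) =>
                (π a ∈ L ∧ π b ∈ L) ∧ (π c ∉ L ∧ π d ∉ L)) := by
            ext π
            simp only [mem_filter, mem_univ, true_and, Sym2.mem_iff, hL, lab,
              Nat.lt_add_one_iff]
            constructor
            · rintro ⟨h1, h2⟩
              refine ⟨⟨?_, ?_⟩, ?_, ?_⟩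
              · simpa [Nat.succ_le_iff] using h1 a (Or.inl rfl)
              · simpa [Nat.succ_le_iff] using h1 b (Or.inr rfl)
              · simp only [mem_filter, mem_univ, true_and, not_lt]
                exact h2 c (Or.inl rfl)
              · simp only [mem_filter, mem_univ, true_and, not_lt]
                exact h2 d (Or.inr rfl)
            · rintro ⟨⟨h1, h2⟩, h3, h4⟩
              simp only [mem_filter, mem_univ, true_and, not_lt] at h1 h2 h3 h4
              constructor
              · rintro v (rfl | rfl)
                · simpa [Nat.succ_le_iff] using h1
                · simpa [Nat.succ_le_iff] using h2
              · rintro v (rfl | rfl)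
                · exact h3
                · exact h4
          rw [hset, hdf, hGJ]
          exact card_S hab hcd hac had hbc hbd L
    · rw [if_neg hdisj]
      push_neg at hdisj
      obtain ⟨x, hx1, hx2⟩ := hdisj
      have : (univ.filter fun π : Equiv.Perm (Fin n) =>
          (∀ v ∈ (e, f).1, lab π v ≤ t) ∧ (∀ v ∈ (e, f).2, t < lab π v)) = ∅ := by
        rw [Finset.filter_eq_empty_iff]
        rintro π _ ⟨h1, h2⟩
        have := h1 x hx1
        have := h2 x hx2
        omega
      rw [this, Finset.card_empty, mul_zero]
  -- summing over all permutations
  have hbig : df * (∑ π : Equiv.Perm (Fin n), R1 G t π * R2 G t π)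
      = Dj.card * (GJ.card * n.factorial) := by
    rw [Finset.sum_congr rfl (fun π _ => hprod π)]
    have hswap : ∑ π : Equiv.Perm (Fin n),
        (P.filter fun p => (∀ v ∈ p.1, lab π v ≤ t) ∧ (∀ v ∈ p.2, t < lab π v)).card
        = ∑ p ∈ P, (univ.filter fun π : Equiv.Perm (Fin n) =>
            (∀ v ∈ p.1, lab π v ≤ t) ∧ (∀ v ∈ p.2, t < lab π v)).card := by
      simp only [Finset.card_filter]
      rw [Finset.sum_comm]
    rw [hswap, Finset.mul_sum, Finset.sum_congr rfl hkey, Finset.sum_ite, Finset.sum_const,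
      Finset.sum_const, smul_eq_mul, smul_eq_mul, mul_zero, add_zero, hDj]
  -- now the real computation
  have hfac0 : ((n.factorial : ℕ) : ℝ) ≠ 0 := Nat.cast_ne_zero.mpr n.factorial_ne_zero
  have hdf0 : ((df : ℕ) : ℝ) ≠ 0 := Nat.cast_ne_zero.mpr hdfpos.ne'
  have hExVal : Ex (fun π => (R1 G t π : ℝ) * (R2 G t π : ℝ))
      = (Dj.card : ℝ) * (GJ.card : ℝ) / (df : ℝ) := by
    unfold Ex
    have hcast : (∑ π : Equiv.Perm (Fin n), (R1 G t π : ℝ) * (R2 G t π : ℝ))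
        = ((∑ π : Equiv.Perm (Fin n), R1 G t π * R2 G t π : ℕ) : ℝ) := by
      push_cast; ring
    rw [hcast]
    have := congrArg (fun m : ℕ => (m : ℝ)) hbig
    push_cast at this
    field_simp
    rw [← hcast]
    linarith [this]
  rw [hExVal]
  -- cast the three counts
  have ht' : t ≤ n := le_of_lt ht2
  have hnt1 : 1 ≤ n - t := by omega
  have hGJcard : GJ.card = (t * t - t) * ((n - t) * (n - t) - (n - t)) := by
    rw [hGJ, card_good_emb, hLcard, hLc]
  have hGJr : (GJ.card : ℝ) = (t : ℝ) * ((t : ℝ) - 1) * (((n : ℝ) - (t : ℝ)) *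
      (((n : ℝ) - (t : ℝ)) - 1)) := by
    rw [hGJcard]
    have h1 : t ≤ t * t := Nat.le_mul_of_pos_left t ht1
    have h2 : (n - t) ≤ (n - t) * (n - t) := Nat.le_mul_of_pos_left _ hnt1
    push_cast [Nat.cast_sub h1, Nat.cast_sub h2, Nat.cast_sub ht']
    ring
  have hdfr : ((df : ℕ) : ℝ) = (n : ℝ) * ((n : ℝ) - 1) * ((n : ℝ) - 2) * ((n : ℝ) - 3) := by
    rw [hdfval]
    have : n.descFactorial 4 = n * (n - 1) * (n - 2) * (n - 3) := by
      simp [Nat.descFactorial]; ring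
    rw [this]
    have h1 : (1:ℕ) ≤ n := by omega
    have h2 : (2:ℕ) ≤ n := by omega
    have h3 : (3:ℕ) ≤ n := by omega
    push_cast [Nat.cast_sub h1, Nat.cast_sub h2, Nat.cast_sub h3]
    ring
  have hDjr : (Dj.card : ℝ) = (E.card : ℝ) ^ 2 - (∑ i : Fin n, (G.degree i : ℝ) ^ 2)
      + (E.card : ℝ) := by
    have := congrArg (fun m : ℕ => (m : ℝ)) (disj_card G)
    push_cast at this
    linarith [this]
  rw [hDjr, hGJr, hdfr]
  have hne : (n : ℝ) * ((n : ℝ) - 1) * ((n : ℝ) - 2) * ((n : ℝ) - 3) ≠ 0 := by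
    rw [← hdfr]; exact hdf0
  field_simp
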